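/- Let K ⊆ L ⊆ R^n be convex bodies in John's position with contact pairs (u_i, v_i)_{i=1}^m, and let x ∈ ∂L ∩ (-n·∂K). Let w ∈ ∂K° satisfy ⟨x, w⟩ = -n, and set A = {i : ⟨u_i, w⟩ < 1}, B = {i : ⟨u_i, w⟩ = 1}. Then -x/n ∈ conv{u_i : i ∈ B}, -w/n ∈ conv{v_i : i ∈ A}, and ⟨x, v_i⟩ = 1 for all i ∈ A. -/

import Mathlib

open Pointwise

noncomputable section

/-- Euclidean space ℝⁿ. -/
abbrev E (n : ℕ) := EuclideanSpace ℝ (Fin n)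

/-- A convex body: compact, convex, with nonempty interior. -/
def IsConvexBody {n : ℕ} (K : Set (E n)) : Prop :=
  IsCompact K ∧ Convex ℝ K ∧ (interior K).Nonempty

/-- The polar body `K° = {x : ⟨x, y⟩ ≤ 1 for all y ∈ K}`. -/
def polarBody {n : ℕ} (K : Set (E n)) : Set (E n) :=
  {x | ∀ y ∈ K, (inner ℝ x y : ℝ) ≤ 1}

/-- The Banach-Mazur distance:
`inf {r > 0 : K + u ⊆ T(L + v) ⊆ r(K + u)}` over invertible linear `T` and
translations `u, v`. -/
def bmDist {n : ℕ} (K L : Set (E n)) : ℝ :=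
  sInf {r : ℝ | 0 < r ∧ ∃ (T : E n ≃ₗ[ℝ] E n) (u v : E n),
    (u +ᵥ K) ⊆ (T : E n →ₗ[ℝ] E n) '' (v +ᵥ L) ∧
    (T : E n →ₗ[ℝ] E n) '' (v +ᵥ L) ⊆ r • (u +ᵥ K)}

/-- The Grünbaum distance: `inf |r|` over nondegenerate affine images
`K'` of `K` and `L'` of `L` with `K' ⊆ L' ⊆ r • K'` (`r` possibly negative). -/
def grDist {n : ℕ} (K L : Set (E n)) : ℝ :=
  sInf {s : ℝ | ∃ (r : ℝ) (F G : E n ≃ᵃ[ℝ] E n), s = |r| ∧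
    (F : E n → E n) '' K ⊆ (G : E n → E n) '' L ∧
    (G : E n → E n) '' L ⊆ r • ((F : E n → E n) '' K)}

/-- The conditions of John's decomposition for given contact pairs
`(u i, v i)` and weights `a i`. -/
def IsJohnData {n : ℕ} (K L : Set (E n)) {m : ℕ}
    (u v : Fin m → E n) (a : Fin m → ℝ) : Prop :=
  (∀ i, u i ∈ frontier K ∩ frontier L) ∧
  (∀ i, v i ∈ frontier (polarBody K) ∩ frontier (polarBody L)) ∧
  (∀ i, 0 < a i) ∧
  (∀ x : E n, x = ∑ i, (a i * (inner ℝ x (v i) : ℝ)) • u i) ∧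
  (∑ i, a i • u i = 0) ∧
  (∑ i, a i • v i = 0) ∧
  (∀ i, (inner ℝ (u i) (v i) : ℝ) = 1)

/-- `K ⊆ L` are in John's position. -/
def IsJohnPosition {n : ℕ} (K L : Set (E n)) : Prop :=
  K ⊆ L ∧ ∃ (m : ℕ), 0 < m ∧ ∃ (u v : Fin m → E n) (a : Fin m → ℝ),
    IsJohnData K L u v a

/-- A triangle in the plane: the convex hull of three affinely
independent points. -/
def IsTriangle (K : Set (E 2)) : Prop :=
  ∃ p : Fin 3 → E 2, AffineIndependent ℝ p ∧ K = convexHull ℝ (Set.range p)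

/-- A centrally symmetric set, with center `c`. -/
def IsCentrallySymmetric {n : ℕ} (L : Set (E n)) : Prop :=
  ∃ c : E n, ∀ x, x ∈ L ↔ (2 : ℝ) • c - x ∈ L

local notation "⟪" a ", " b "⟫" => @inner ℝ _ _ a b

lemma polarBody_isClosed {n : ℕ} (K : Set (E n)) : IsClosed (polarBody K) := by
  have : polarBody K = ⋂ y ∈ K, {z : E n | ⟪z, y⟫ ≤ 1} := by
    ext z; simp [polarBody, Set.mem_iInter]
  rw [this]
  exact isClosed_biInter fun y _ =>
    isClosed_le (Continuous.inner continuous_id continuous_const) continuous_const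

/-- Conditions holding at a contact point `x ∈ ∂L ∩ (-n ∂K)` for convex
bodies `K ⊆ L` in John's position. -/
theorem stmt8 (n m : ℕ) (K L : Set (E n)) (hK : IsConvexBody K)
    (hL : IsConvexBody L) (hKL : K ⊆ L)
    (u v : Fin m → E n) (a : Fin m → ℝ) (hJ : IsJohnData K L u v a)
    (x : E n) (hx : x ∈ frontier L ∩ ((-(n : ℝ)) • frontier K))
    (w : E n) (hw : w ∈ frontier (polarBody K))
    (hxw : (inner ℝ x w : ℝ) = -(n : ℝ))
    (A B : Set (Fin m))
    (hA : A = {i | (inner ℝ (u i) w : ℝ) < 1})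
    (hB : B = {i | (inner ℝ (u i) w : ℝ) = 1}) :
    (-(1 / (n : ℝ))) • x ∈ convexHull ℝ (u '' B) ∧
    (-(1 / (n : ℝ))) • w ∈ convexHull ℝ (v '' A) ∧
    (∀ i ∈ A, (inner ℝ x (v i) : ℝ) = 1) := by
  classical
  obtain ⟨hu, hv, ha, hdec, hsU, hsV, hUV⟩ := hJ
  -- n ≠ 0
  have hn0 : (n : ℝ) ≠ 0 := by
    have : n ≠ 0 := by
      rintro rfl
      obtain ⟨y, hy⟩ := hL.2.2
      have hxy : x = y := by ext i; exact i.elim0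
      exact hx.1.2 (hxy ▸ hy)
    exact_mod_cast this
  -- basic memberships
  have hxL : x ∈ L := hL.1.isClosed.frontier_subset hx.1
  have huK : ∀ i, u i ∈ K := fun i => hK.1.isClosed.frontier_subset (hu i).1
  have hvLp : ∀ i, v i ∈ polarBody L := fun i => (polarBody_isClosed L).frontier_subset (hv i).2
  have hwKp : w ∈ polarBody K := (polarBody_isClosed K).frontier_subset hw
  -- scalar bounds
  have hq1 : ∀ i, ⟪x, v i⟫ ≤ 1 := fun i => by
    have := hvLp i x hxL
    rwa [real_inner_comm] at this
  have ht1 : ∀ i, ⟪u i, w⟫ ≤ 1 := fun i => by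
    have := hwKp (u i) (huK i)
    rwa [real_inner_comm] at this
  -- sum identities
  have hsumt : ∑ i, a i * ⟪u i, w⟫ = 0 := by
    have h0 : ⟪(∑ i, a i • u i : E n), w⟫ = (0 : ℝ) := by rw [hsU]; simp
    rw [sum_inner] at h0
    rw [← h0]
    exact Finset.sum_congr rfl fun i _ => (real_inner_smul_left _ _ _).symm
  have hsumq : ∑ i, a i * ⟪x, v i⟫ = 0 := by
    have h0 : ⟪x, (∑ i, a i • v i : E n)⟫ = (0 : ℝ) := by rw [hsV]; simp
    rw [inner_sum] at h0
    rw [← h0]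
    exact Finset.sum_congr rfl fun i _ => (real_inner_smul_right _ _ _).symm
  have hsumqt : ∑ i, a i * ⟪x, v i⟫ * ⟪u i, w⟫ = -(n : ℝ) := by
    have h3 : ⟪(∑ i, (a i * ⟪x, v i⟫) • u i : E n), w⟫ = ⟪x, w⟫ := by rw [← hdec x]
    rw [sum_inner] at h3
    rw [← hxw, ← h3]
    exact Finset.sum_congr rfl fun i _ => by rw [real_inner_smul_left]
  -- trace identity : ∑ a i = n
  have htrace : ∑ i, a i = (n : ℝ) := by
    set b := EuclideanSpace.basisFun (Fin n) ℝ with hbdef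
    have h1 : ∀ j : Fin n, ∑ i, a i * (⟪u i, b j⟫ * ⟪b j, v i⟫) = 1 := by
      intro j
      have h3 : ⟪(∑ i, (a i * ⟪b j, v i⟫) • u i : E n), b j⟫ = ⟪b j, b j⟫ := by
        rw [← hdec (b j)]
      rw [sum_inner] at h3
      have hb1 : ⟪b j, b j⟫ = (1 : ℝ) := by
        rw [real_inner_self_eq_norm_sq, b.orthonormal.1 j]; norm_num
      rw [hb1] at h3
      rw [← h3]
      exact Finset.sum_congr rfl fun i _ => by rw [real_inner_smul_left]; ring
    calc ∑ i, a i = ∑ i, a i * ⟪u i, v i⟫ := by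
          exact Finset.sum_congr rfl fun i _ => by rw [hUV i, mul_one]
      _ = ∑ i, a i * ∑ j, ⟪u i, b j⟫ * ⟪b j, v i⟫ := by
          exact Finset.sum_congr rfl fun i _ => by rw [b.sum_inner_mul_inner]
      _ = ∑ i, ∑ j, a i * (⟪u i, b j⟫ * ⟪b j, v i⟫) := by
          exact Finset.sum_congr rfl fun i _ => Finset.mul_sum _ _ _
      _ = ∑ j : Fin n, ∑ i, a i * (⟪u i, b j⟫ * ⟪b j, v i⟫) := Finset.sum_comm
      _ = ∑ j : Fin n, (1 : ℝ) := Finset.sum_congr rfl fun j _ => h1 j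
      _ = (n : ℝ) := by simp
  -- adjoint identity : w = ∑ (a i * ⟪u i, w⟫) • v i
  have hadj : ∑ i, (a i * ⟪u i, w⟫) • v i = w := by
    have hy : ∀ y : E n, ⟪y, (∑ i, (a i * ⟪u i, w⟫) • v i) - w⟫ = (0 : ℝ) := by
      intro y
      have h1 : ⟪y, w⟫ = ∑ i, (a i * ⟪y, v i⟫) * ⟪u i, w⟫ := by
        have h3 : ⟪(∑ i, (a i * ⟪y, v i⟫) • u i : E n), w⟫ = ⟪y, w⟫ := by rw [← hdec y]
        rw [sum_inner] at h3
        rw [← h3]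
        exact Finset.sum_congr rfl fun i _ => by rw [real_inner_smul_left]
      rw [inner_sub_right, inner_sum, h1,
        Finset.sum_congr rfl fun i (_ : i ∈ Finset.univ) =>
          (real_inner_smul_right y (v i) (a i * ⟪u i, w⟫)),
        ← Finset.sum_sub_distrib]
      exact Finset.sum_eq_zero fun i _ => by ring
    have h0 := hy ((∑ i, (a i * ⟪u i, w⟫) • v i) - w)
    rw [inner_self_eq_zero] at h0
    exact sub_eq_zero.mp h0
  -- the key sum of nonnegative terms vanishes
  have hS : ∑ i, a i * (1 - ⟪x, v i⟫) * (1 - ⟪u i, w⟫) = 0 := by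
    have expand : ∀ i : Fin m, a i * (1 - ⟪x, v i⟫) * (1 - ⟪u i, w⟫)
        = a i - a i * ⟪u i, w⟫ - a i * ⟪x, v i⟫ + a i * ⟪x, v i⟫ * ⟪u i, w⟫ :=
      fun i => by ring
    rw [Finset.sum_congr rfl fun i _ => expand i, Finset.sum_add_distrib,
      Finset.sum_sub_distrib, Finset.sum_sub_distrib, htrace, hsumt, hsumq, hsumqt]
    ring
  have hterm : ∀ i, a i * (1 - ⟪x, v i⟫) * (1 - ⟪u i, w⟫) = 0 := by
    have hnn : ∀ i ∈ Finset.univ, (0:ℝ) ≤ a i * (1 - ⟪x, v i⟫) * (1 - ⟪u i, w⟫) :=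
      fun i _ => mul_nonneg (mul_nonneg (ha i).le (by linarith [hq1 i])) (by linarith [ht1 i])
    have h0 := (Finset.sum_eq_zero_iff_of_nonneg hnn).mp hS
    exact fun i => h0 i (Finset.mem_univ i)
  -- conclusion 3
  have hqA : ∀ i ∈ A, ⟪x, v i⟫ = (1:ℝ) := by
    intro i hi
    rw [hA, Set.mem_setOf_eq] at hi
    have h0 := hterm i
    rcases mul_eq_zero.mp h0 with h1 | h1
    · rcases mul_eq_zero.mp h1 with h2 | h2
      · exact absurd h2 (ha i).ne'
      · linarith
    · linarith
  -- complement facts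
  have hnotB : ∀ i, i ∉ B → ⟪x, v i⟫ = 1 := by
    intro i hi
    rw [hB, Set.mem_setOf_eq] at hi
    exact hqA i (by rw [hA]; exact lt_of_le_of_ne (ht1 i) hi)
  have hnotA : ∀ i, i ∉ A → ⟪u i, w⟫ = 1 := by
    intro i hi
    rw [hA, Set.mem_setOf_eq, not_lt] at hi
    exact le_antisymm (ht1 i) hi
  refine ⟨?_, ?_, hqA⟩
  -- conclusion 1
  · set μ : Fin m → ℝ := fun i => a i * (1 - ⟪x, v i⟫) / n with hμ
    set T : Finset (Fin m) := Finset.univ.filter (fun i => i ∈ B) with hT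
    have hμzero : ∀ i, i ∉ B → μ i = 0 := fun i hi => by
      rw [hμ]; simp only []; rw [hnotB i hi]; ring
    have hμuniv : ∀ f : Fin m → E n, ∑ i ∈ T, μ i • f i = ∑ i, μ i • f i := by
      intro f
      refine Finset.sum_subset (Finset.subset_univ T) fun i _ hi => ?_
      rw [hμzero i (by simpa [hT] using hi), zero_smul]
    have hμsum : ∑ i ∈ T, μ i = 1 := by
      have h1 : ∑ i, μ i = 1 := by
        have : ∀ i : Fin m, μ i = (a i - a i * ⟪x, v i⟫) / n := fun i => by rw [hμ]; ring
        rw [Finset.sum_congr rfl fun i _ => this i, ← Finset.sum_div,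
          Finset.sum_sub_distrib, htrace, hsumq]
        field_simp
        ring
      rw [← h1]
      refine Finset.sum_subset (Finset.subset_univ T) fun i _ hi => ?_
      exact hμzero i (by simpa [hT] using hi)
    have hval : ∑ i ∈ T, μ i • u i = (-(1 / (n : ℝ))) • x := by
      rw [hμuniv]
      have step : ∀ i : Fin m, μ i • u i
          = (1/(n:ℝ)) • (a i • u i) - (1/(n:ℝ)) • ((a i * ⟪x, v i⟫) • u i) := by
        intro i
        rw [smul_smul, smul_smul, ← sub_smul, hμ]
        congr 1
        field_simp
      rw [Finset.sum_congr rfl fun i _ => step i, Finset.sum_sub_distrib,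
        ← Finset.smul_sum, ← Finset.smul_sum, hsU, ← hdec x, smul_zero, zero_sub, neg_smul]
    rw [← hval]
    refine (convex_convexHull ℝ (u '' B)).sum_mem
      (fun i _ => div_nonneg (mul_nonneg (ha i).le (by linarith [hq1 i]))
        (by positivity)) hμsum fun i hi => ?_
    exact subset_convexHull ℝ _ ⟨i, by simpa [hT] using hi, rfl⟩
  -- conclusion 2
  · set ν : Fin m → ℝ := fun i => a i * (1 - ⟪u i, w⟫) / n with hν
    set T : Finset (Fin m) := Finset.univ.filter (fun i => i ∈ A) with hT
    have hνzero : ∀ i, i ∉ A → ν i = 0 := fun i hi => by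
      rw [hν]; simp only []; rw [hnotA i hi]; ring
    have hνsum : ∑ i ∈ T, ν i = 1 := by
      have h1 : ∑ i, ν i = 1 := by
        have : ∀ i : Fin m, ν i = (a i - a i * ⟪u i, w⟫) / n := fun i => by rw [hν]; ring
        rw [Finset.sum_congr rfl fun i _ => this i, ← Finset.sum_div,
          Finset.sum_sub_distrib, htrace, hsumt]
        field_simp
        ring
      rw [← h1]
      refine Finset.sum_subset (Finset.subset_univ T) fun i _ hi => ?_
      exact hνzero i (by simpa [hT] using hi)
    have hval : ∑ i ∈ T, ν i • v i = (-(1 / (n : ℝ))) • w := by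
      rw [Finset.sum_subset (Finset.subset_univ T) fun i _ hi => by
        rw [hνzero i (by simpa [hT] using hi), zero_smul]]
      have step : ∀ i : Fin m, ν i • v i
          = (1/(n:ℝ)) • (a i • v i) - (1/(n:ℝ)) • ((a i * ⟪u i, w⟫) • v i) := by
        intro i
        rw [smul_smul, smul_smul, ← sub_smul, hν]
        congr 1
        field_simp
      rw [Finset.sum_congr rfl fun i _ => step i, Finset.sum_sub_distrib,
        ← Finset.smul_sum, ← Finset.smul_sum, hsV, hadj, smul_zero, zero_sub, neg_smul]
    rw [← hval]
    refine (convex_convexHull ℝ (v '' A)).sum_mem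
      (fun i _ => div_nonneg (mul_nonneg (ha i).le (by linarith [ht1 i]))
        (by positivity)) hνsum fun i hi => ?_
    exact subset_convexHull ℝ _ ⟨i, by simpa [hT] using hi, rfl⟩
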